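/- arXiv:1705.07276 — 5 statements merged into one kernel-verified Lean document; each statement's English description precedes it below -/
import Mathlib

section
/- Let D be a line of PG(5,K) (a 2-dimensional subspace of V) such that the set E_D of planes that contain D and are external to H₅ is nonempty. Let f be any function assigning to each point v of D (each 1-dimensional subspace v ≤ D) a plane f(v) ∈ E_D (so D ≤ f(v) and f(v) is external to H₅). Then the set H := { X : X is a line and v ≤ X ≤ f(v) for some point v of D }, i.e. the union of the pencils L[v, f(v)] over all points v of D, is a pencilled hfd line set. -/
/-- The Klein quadratic form on `K^6`. -/
def kleinQ {K : Type*} [Field K] (x : Fin 6 → K) : K :=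
  x 0 * x 1 + x 2 * x 3 + x 4 * x 5

/-- The polar bilinear form `B(x,y) = Q(x+y) - Q(x) - Q(y)`. -/
def kleinB {K : Type*} [Field K] (x y : Fin 6 → K) : K :=
  kleinQ (x + y) - kleinQ x - kleinQ y

/-- The polar subspace `π₅(S)` of a subspace `S`. -/
def kleinPolar {K : Type*} [Field K] (S : Submodule K (Fin 6 → K)) :
    Submodule K (Fin 6 → K) where
  carrier := {y | ∀ s ∈ S, kleinB s y = 0}
  add_mem' := by
    intro a b ha hb s hs
    have h1 := ha s hs
    have h2 := hb s hs
    simp only [kleinB, kleinQ, Pi.add_apply] at *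
    linear_combination h1 + h2
  zero_mem' := by
    intro s hs
    simp [kleinB, kleinQ]
  smul_mem' := by
    intro c a ha s hs
    have h1 := ha s hs
    simp only [kleinB, kleinQ, Pi.add_apply, Pi.smul_apply, smul_eq_mul] at *
    linear_combination c * h1

/-- `τ` is a tangent hyperplane of the Klein quadric. -/
def IsTangentHyperplane {K : Type*} [Field K] (τ : Submodule K (Fin 6 → K)) : Prop :=
  ∃ x : Fin 6 → K, x ≠ 0 ∧ kleinQ x = 0 ∧ τ = kleinPolar (Submodule.span K {x})

/-- A subspace is external to the Klein quadric. -/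
def IsExternal {K : Type*} [Field K] (S : Submodule K (Fin 6 → K)) : Prop :=
  ∀ s ∈ S, s ≠ 0 → kleinQ s ≠ 0

/-- A `0`-secant of the Klein quadric: an external line. -/
def IsSecant {K : Type*} [Field K] (G : Submodule K (Fin 6 → K)) : Prop :=
  Module.finrank K G = 2 ∧ IsExternal G

/-- The pencil of lines with vertex `v` and carrier plane `κ`. -/
def pencil {K : Type*} [Field K] (v κ : Submodule K (Fin 6 → K)) :
    Set (Submodule K (Fin 6 → K)) :=
  {X | Module.finrank K X = 2 ∧ v ≤ X ∧ X ≤ κ}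

/-- An hfd line set: a set of `0`-secants such that every tangent hyperplane
contains exactly one member. -/
def IsHfd {K : Type*} [Field K] (H : Set (Submodule K (Fin 6 → K))) : Prop :=
  (∀ G ∈ H, IsSecant G) ∧
    ∀ τ : Submodule K (Fin 6 → K), IsTangentHyperplane τ → ∃! G, G ∈ H ∧ G ≤ τ

/-- A pencilled hfd line set: every member lies in a pencil entirely contained in `H`. -/
def IsPencilledHfd {K : Type*} [Field K] (H : Set (Submodule K (Fin 6 → K))) : Prop :=
  IsHfd H ∧
    ∀ G ∈ H, ∃ v κ : Submodule K (Fin 6 → K), Module.finrank K v = 1 ∧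
      Module.finrank K κ = 3 ∧ v ≤ κ ∧ pencil v κ ⊆ H ∧ G ∈ pencil v κ

/-- `v` is a vertex of the pencilled hfd line set `H`. -/
def IsVertex {K : Type*} [Field K] (H : Set (Submodule K (Fin 6 → K)))
    (v : Submodule K (Fin 6 → K)) : Prop :=
  Module.finrank K v = 1 ∧ ∃ κ : Submodule K (Fin 6 → K),
    Module.finrank K κ = 3 ∧ v ≤ κ ∧ pencil v κ ⊆ H

/-- `κ` is a carrier plane of the pencilled hfd line set `H`. -/
def IsCarrier {K : Type*} [Field K] (H : Set (Submodule K (Fin 6 → K)))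
    (κ : Submodule K (Fin 6 → K)) : Prop :=
  Module.finrank K κ = 3 ∧ ∃ v : Submodule K (Fin 6 → K),
    Module.finrank K v = 1 ∧ v ≤ κ ∧ pencil v κ ⊆ H

namespace KleinAux
variable {K : Type*} [Field K]

lemma finrank_inf_ker {S : Submodule K (Fin 6 → K)} {φ : (Fin 6 → K) →ₗ[K] K}
    (h : ¬ S ≤ LinearMap.ker φ) :
    Module.finrank K ↥(S ⊓ LinearMap.ker φ) + 1 = Module.finrank K S := by
  classical
  set ψ := φ.comp S.subtype with hψ
  have hker : LinearMap.ker ψ = Submodule.comap S.subtype (LinearMap.ker φ) := by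
    rw [hψ, LinearMap.ker_comp]
  have hmap : Submodule.map S.subtype (LinearMap.ker ψ) = S ⊓ LinearMap.ker φ := by
    rw [hker, Submodule.map_comap_subtype]
  have hfr : Module.finrank K ↥(S ⊓ LinearMap.ker φ) = Module.finrank K (LinearMap.ker ψ) := by
    rw [← hmap]; exact Submodule.finrank_map_subtype_eq S _
  obtain ⟨s, hsS, hs⟩ : ∃ s ∈ S, φ s ≠ 0 := by
    by_contra hc; push_neg at hc; exact h fun s hsS => hc s hsS
  have hrange : LinearMap.range ψ = ⊤ := by
    rw [LinearMap.range_eq_top]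
    intro a
    refine ⟨(a * (φ s)⁻¹) • ⟨s, hsS⟩, ?_⟩
    simp [hψ, mul_assoc, inv_mul_cancel₀ hs]
  have hrn := LinearMap.finrank_range_add_finrank_ker ψ
  rw [hrange, finrank_top] at hrn
  rw [hfr]
  simp [Module.finrank_self] at hrn
  omega

lemma le_finrank_inf_ker (S : Submodule K (Fin 6 → K)) (φ : (Fin 6 → K) →ₗ[K] K) :
    Module.finrank K S ≤ Module.finrank K ↥(S ⊓ LinearMap.ker φ) + 1 := by
  by_cases h : S ≤ LinearMap.ker φ
  · rw [inf_eq_left.mpr h]; omega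
  · rw [finrank_inf_ker h]

/-- The polar functional `B(x, ·)` as a linear map. -/
def kB (x : Fin 6 → K) : (Fin 6 → K) →ₗ[K] K where
  toFun y := x 0 * y 1 + x 1 * y 0 + x 2 * y 3 + x 3 * y 2 + x 4 * y 5 + x 5 * y 4
  map_add' a b := by simp only [Pi.add_apply]; ring
  map_smul' c a := by simp only [Pi.smul_apply, smul_eq_mul, RingHom.id_apply]; ring

lemma kleinB_eq_kB (x y : Fin 6 → K) : kleinB x y = kB x y := by
  simp only [kleinB, kleinQ, kB, Pi.add_apply, LinearMap.coe_mk, AddHom.coe_mk]; ring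

lemma kleinQ_add_smul (e x : Fin 6 → K) (c : K) :
    kleinQ (e + c • x) = kleinQ e + c * kleinB x e + c ^ 2 * kleinQ x := by
  simp only [kleinQ, kleinB, Pi.add_apply, Pi.smul_apply, smul_eq_mul]; ring

def oddProj : (Fin 6 → K) →ₗ[K] (Fin 3 → K) :=
  LinearMap.pi fun i => LinearMap.proj (![1, 3, 5] i)

def evenProj : (Fin 6 → K) →ₗ[K] (Fin 3 → K) :=
  LinearMap.pi fun i => LinearMap.proj (![0, 2, 4] i)

lemma mem_ker_oddProj {y : Fin 6 → K} :
    y ∈ LinearMap.ker (oddProj (K := K)) ↔ y 1 = 0 ∧ y 3 = 0 ∧ y 5 = 0 := by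
  constructor
  · intro h
    have h' := fun i => congrFun (LinearMap.mem_ker.mp h) i
    exact ⟨by simpa [oddProj] using h' 0, by simpa [oddProj] using h' 1,
      by simpa [oddProj] using h' 2⟩
  · rintro ⟨h1, h3, h5⟩
    rw [LinearMap.mem_ker]; funext i; fin_cases i <;> simp [oddProj, h1, h3, h5]

lemma mem_ker_evenProj {y : Fin 6 → K} :
    y ∈ LinearMap.ker (evenProj (K := K)) ↔ y 0 = 0 ∧ y 2 = 0 ∧ y 4 = 0 := by
  constructor
  · intro h
    have h' := fun i => congrFun (LinearMap.mem_ker.mp h) i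
    exact ⟨by simpa [evenProj] using h' 0, by simpa [evenProj] using h' 1,
      by simpa [evenProj] using h' 2⟩
  · rintro ⟨h1, h3, h5⟩
    rw [LinearMap.mem_ker]; funext i; fin_cases i <;> simp [evenProj, h1, h3, h5]


lemma surj_oddProj : Function.Surjective (oddProj (K := K)) := by
  intro z
  refine ⟨fun j => if j = 1 then z 0 else if j = 3 then z 1 else if j = 5 then z 2 else 0, ?_⟩
  funext i; fin_cases i <;> simp [oddProj]

lemma surj_evenProj : Function.Surjective (evenProj (K := K)) := by
  intro z
  refine ⟨fun j => if j = 0 then z 0 else if j = 2 then z 1 else if j = 4 then z 2 else 0, ?_⟩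
  funext i; fin_cases i <;> simp [evenProj]

lemma finrank_ker_of_surj (φ : (Fin 6 → K) →ₗ[K] (Fin 3 → K)) (hs : Function.Surjective φ) :
    Module.finrank K (LinearMap.ker φ) = 3 := by
  have hrn := LinearMap.finrank_range_add_finrank_ker φ
  rw [LinearMap.range_eq_top.mpr hs, finrank_top] at hrn
  have h6 : Module.finrank K (Fin 6 → K) = 6 := by simp
  have h3 : Module.finrank K (Fin 3 → K) = 3 := by simp
  omega

lemma finrank_ker_oddProj : Module.finrank K (LinearMap.ker (oddProj (K := K))) = 3 :=
  finrank_ker_of_surj _ surj_oddProj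

lemma finrank_ker_evenProj : Module.finrank K (LinearMap.ker (evenProj (K := K))) = 3 :=
  finrank_ker_of_surj _ surj_evenProj

lemma singular_oddProj {t : Fin 6 → K} (h : t ∈ LinearMap.ker (oddProj (K := K))) :
    kleinQ t = 0 := by
  obtain ⟨h1, h3, h5⟩ := mem_ker_oddProj.mp h
  simp [kleinQ, h1, h3, h5]

lemma singular_evenProj {t : Fin 6 → K} (h : t ∈ LinearMap.ker (evenProj (K := K))) :
    kleinQ t = 0 := by
  obtain ⟨h0, h2, h4⟩ := mem_ker_evenProj.mp h
  simp [kleinQ, h0, h2, h4]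


lemma singular_in_T {ε : Submodule K (Fin 6 → K)} (hε3 : Module.finrank K ε = 3)
    (hext : ∀ s ∈ ε, s ≠ 0 → kleinQ s ≠ 0) {x : Fin 6 → K} (hx : x ≠ 0) (hQ : kleinQ x = 0)
    (hperp : ∀ e ∈ ε, kleinB x e = 0)
    {T : Submodule K (Fin 6 → K)} (hT3 : Module.finrank K T = 3)
    (hTsing : ∀ t ∈ T, kleinQ t = 0) : x ∈ T := by
  have hxε : x ∉ ε := fun h => hext x h hx hQ
  have hdisj : ε ⊓ Submodule.span K {x} = ⊥ := by
    rw [Submodule.eq_bot_iff]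
    rintro y ⟨hyε, hy⟩
    obtain ⟨c, rfl⟩ := Submodule.mem_span_singleton.mp hy
    rcases eq_or_ne c 0 with rfl | hc
    · simp
    · have h' : (c⁻¹ * c) • x ∈ ε := by rw [mul_smul]; exact ε.smul_mem c⁻¹ hyε
      rw [inv_mul_cancel₀ hc, one_smul] at h'
      exact absurd h' hxε
  have hW4 : Module.finrank K ↥(ε ⊔ Submodule.span K {x}) = 4 := by
    have h' := Submodule.finrank_sup_add_finrank_inf_eq ε (Submodule.span K {x})
    rw [hdisj, finrank_bot, finrank_span_singleton hx, hε3] at h'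
    omega
  have hTW : 1 ≤ Module.finrank K ↥(T ⊓ (ε ⊔ Submodule.span K {x})) := by
    have h1 := Submodule.finrank_sup_add_finrank_inf_eq T (ε ⊔ Submodule.span K {x})
    have h2 : Module.finrank K ↥(T ⊔ (ε ⊔ Submodule.span K {x})) ≤ 6 := by
      have h3 := Submodule.finrank_le (T ⊔ (ε ⊔ Submodule.span K {x}))
      simpa using h3
    omega
  have hne : T ⊓ (ε ⊔ Submodule.span K {x}) ≠ ⊥ := by
    intro hb
    rw [hb, finrank_bot] at hTW
    omega
  obtain ⟨t, htm, ht0⟩ := Submodule.exists_mem_ne_zero_of_ne_bot hne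
  obtain ⟨htT, htW⟩ := htm
  obtain ⟨e, heε, sx, hsx, rfl⟩ := Submodule.mem_sup.mp htW
  obtain ⟨c, rfl⟩ := Submodule.mem_span_singleton.mp hsx
  have hQt : kleinQ (e + c • x) = 0 := hTsing _ htT
  rw [kleinQ_add_smul, hperp e heε, hQ] at hQt
  have hQe : kleinQ e = 0 := by linear_combination hQt
  have he0 : e = 0 := by
    by_contra h0; exact hext e heε h0 hQe
  have hc : c ≠ 0 := by
    rintro rfl; rw [he0] at ht0; simp at ht0
  have hxt : x ∈ T := by
    have h' := T.smul_mem c⁻¹ htT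
    rw [he0, zero_add, smul_smul, inv_mul_cancel₀ hc, one_smul] at h'
    exact h'
  exact hxt

lemma external_not_perp {ε : Submodule K (Fin 6 → K)} (hε3 : Module.finrank K ε = 3)
    (hext : ∀ s ∈ ε, s ≠ 0 → kleinQ s ≠ 0) {x : Fin 6 → K} (hx : x ≠ 0)
    (hQ : kleinQ x = 0) : ∃ e ∈ ε, kleinB x e ≠ 0 := by
  by_contra h
  push_neg at h
  have h1 : x ∈ LinearMap.ker (oddProj (K := K)) :=
    singular_in_T hε3 hext hx hQ h finrank_ker_oddProj (fun t ht => singular_oddProj ht)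
  have h2 : x ∈ LinearMap.ker (evenProj (K := K)) :=
    singular_in_T hε3 hext hx hQ h finrank_ker_evenProj (fun t ht => singular_evenProj ht)
  obtain ⟨a1, a3, a5⟩ := mem_ker_oddProj.mp h1
  obtain ⟨a0, a2, a4⟩ := mem_ker_evenProj.mp h2
  apply hx
  funext i
  fin_cases i <;> assumption

end KleinAux

lemma KleinAux.kleinPolar_span_singleton {K : Type*} [Field K] (x : Fin 6 → K) :
    kleinPolar (Submodule.span K {x}) = LinearMap.ker (KleinAux.kB x) := by
  ext y
  have hmem : y ∈ kleinPolar (Submodule.span K {x}) ↔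
      ∀ s ∈ Submodule.span K {x}, kleinB s y = 0 := Iff.rfl
  rw [hmem, LinearMap.mem_ker, ← KleinAux.kleinB_eq_kB]
  constructor
  · intro h
    exact h x (Submodule.mem_span_singleton_self x)
  · intro h s hs
    obtain ⟨c, rfl⟩ := Submodule.mem_span_singleton.mp hs
    have h2 : kleinB (c • x) y = c * kleinB x y := by
      simp only [kleinB, kleinQ, Pi.add_apply, Pi.smul_apply, smul_eq_mul]; ring
    rw [h2, h, mul_zero]

/-- Theorem: construction of pencilled hfd line sets.
If `D` is a line such that the set `E_D` of external planes through `D` is nonempty,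
and `f` assigns to every point `v` of `D` an external plane `f v` through `D`,
then the union of the pencils `L[v, f v]` over the points `v` of `D` is a
pencilled hfd line set. -/
theorem construction_pencilled_hfd {K : Type*} [Field K]
    (D : Submodule K (Fin 6 → K)) (hD : Module.finrank K D = 2)
    (hED : ∃ ε : Submodule K (Fin 6 → K),
      Module.finrank K ε = 3 ∧ D ≤ ε ∧ IsExternal ε)
    (f : Submodule K (Fin 6 → K) → Submodule K (Fin 6 → K))
    (hf : ∀ v : Submodule K (Fin 6 → K), Module.finrank K v = 1 → v ≤ D →
      Module.finrank K (f v) = 3 ∧ D ≤ f v ∧ IsExternal (f v)) :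
    IsPencilledHfd {X : Submodule K (Fin 6 → K) |
      ∃ v : Submodule K (Fin 6 → K),
        Module.finrank K v = 1 ∧ v ≤ D ∧ X ∈ pencil v (f v)} := by
  classical
  constructor
  · constructor
    · rintro G ⟨v, hv1, hvD, hG2, hvG, hGf⟩
      exact ⟨hG2, fun s hs hs0 => (hf v hv1 hvD).2.2 s (hGf hs) hs0⟩
    · rintro τ ⟨x, hx, hQx, rfl⟩
      rw [KleinAux.kleinPolar_span_singleton]
      have hD1 : 1 ≤ Module.finrank K ↥(D ⊓ LinearMap.ker (KleinAux.kB x)) := by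
        have h0 := KleinAux.le_finrank_inf_ker D (KleinAux.kB x)
        omega
      have hne : D ⊓ LinearMap.ker (KleinAux.kB x) ≠ ⊥ := by
        intro hb; rw [hb, finrank_bot] at hD1; omega
      obtain ⟨d, hdm, hd0⟩ := Submodule.exists_mem_ne_zero_of_ne_bot hne
      obtain ⟨hdD, hdk⟩ := hdm
      have hv01 : Module.finrank K (Submodule.span K {d}) = 1 := finrank_span_singleton hd0
      have hv0D : Submodule.span K {d} ≤ D :=
        Submodule.span_le.mpr (Set.singleton_subset_iff.mpr hdD)
      have hv0k : Submodule.span K {d} ≤ LinearMap.ker (KleinAux.kB x) :=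
        Submodule.span_le.mpr (Set.singleton_subset_iff.mpr hdk)
      have key : ∀ w : Submodule K (Fin 6 → K), Module.finrank K w = 1 → w ≤ D →
          Module.finrank K ↥(f w ⊓ LinearMap.ker (KleinAux.kB x)) + 1 = 3 := by
        intro w hw1 hwD
        obtain ⟨h3, hDfw, hextw⟩ := hf w hw1 hwD
        have hnl : ¬ f w ≤ LinearMap.ker (KleinAux.kB x) := by
          obtain ⟨e, he, hBe⟩ := KleinAux.external_not_perp h3 hextw hx hQx
          intro hle
          have h4 := hle he
          rw [LinearMap.mem_ker, ← KleinAux.kleinB_eq_kB] at h4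
          exact hBe h4
        have h2 := KleinAux.finrank_inf_ker hnl
        omega
      obtain ⟨hf3, hfD, hfext⟩ := hf (Submodule.span K {d}) hv01 hv0D
      have hG2 := key (Submodule.span K {d}) hv01 hv0D
      refine ⟨f (Submodule.span K {d}) ⊓ LinearMap.ker (KleinAux.kB x),
        ⟨⟨Submodule.span K {d}, hv01, hv0D, by omega,
          le_inf (hv0D.trans hfD) hv0k, inf_le_left⟩, inf_le_right⟩, ?_⟩
      rintro X ⟨⟨u, hu1, huD, hX2, huX, hXf⟩, hXτ⟩
      have hu2 := key u hu1 huD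
      by_cases hDk : D ≤ LinearMap.ker (KleinAux.kB x)
      · have hDu : D = f u ⊓ LinearMap.ker (KleinAux.kB x) :=
          Submodule.eq_of_le_of_finrank_le (le_inf (hf u hu1 huD).2.1 hDk) (by omega)
        have hDv : D = f (Submodule.span K {d}) ⊓ LinearMap.ker (KleinAux.kB x) :=
          Submodule.eq_of_le_of_finrank_le (le_inf hfD hDk) (by omega)
        have hXD : X = D :=
          Submodule.eq_of_le_of_finrank_le (hDu ▸ le_inf hXf hXτ) (by omega)
        rw [hXD, ← hDv]
      · have h1 : Module.finrank K ↥(D ⊓ LinearMap.ker (KleinAux.kB x)) + 1 = 2 := by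
          have h0 := KleinAux.finrank_inf_ker hDk
          omega
        have hu' : u = D ⊓ LinearMap.ker (KleinAux.kB x) :=
          Submodule.eq_of_le_of_finrank_le (le_inf huD (huX.trans hXτ)) (by omega)
        have hv' : Submodule.span K {d} = D ⊓ LinearMap.ker (KleinAux.kB x) :=
          Submodule.eq_of_le_of_finrank_le (le_inf hv0D hv0k) (by omega)
        rw [hu', ← hv'] at hXf
        exact Submodule.eq_of_le_of_finrank_le (le_inf hXf hXτ) (by omega)
  · rintro G ⟨v, hv1, hvD, hGp⟩
    exact ⟨v, f v, hv1, (hf v hv1 hvD).1, hvD.trans (hf v hv1 hvD).2.1,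
      fun X hX => ⟨v, hv1, hvD, hX⟩, hGp⟩
end

section
/- Let H be a pencilled hfd line set in PG(5,K). Then every carrier plane of H is external to the Klein quadric H₅, that is, if v is a point, κ a plane with v ≤ κ, and the pencil L[v,κ] is entirely contained in H, then Q(s) ≠ 0 for every nonzero s ∈ κ. -/
/-- Main Theorem, part (a).
Every carrier plane of a pencilled hfd line set is external to the Klein quadric. -/
theorem carrier_plane_external {K : Type*} [Field K]
    (H : Set (Submodule K (Fin 6 → K))) (hH : IsPencilledHfd H)
    (v κ : Submodule K (Fin 6 → K))
    (hv : Module.finrank K v = 1) (hκ : Module.finrank K κ = 3)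
    (hvκ : v ≤ κ) (hpen : pencil v κ ⊆ H) :
    IsExternal κ := by
  -- auxiliary: any w ∈ κ \ v gives a line of the pencil
  have key : ∀ w ∈ κ, w ∉ v → (v ⊔ Submodule.span K {w}) ∈ pencil v κ := by
    intro w hwκ hwv
    have hw0 : w ≠ 0 := fun h => hwv (h ▸ v.zero_mem)
    have hspan : Module.finrank K (Submodule.span K {w}) = 1 :=
      finrank_span_singleton hw0
    have hinf : v ⊓ Submodule.span K {w} = ⊥ := by
      rw [eq_bot_iff]
      intro x hx
      obtain ⟨c, hc⟩ := Submodule.mem_span_singleton.mp hx.2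
      rcases eq_or_ne c 0 with rfl | hc0
      · simp [← hc]
      · exact absurd (by
          have : w = c⁻¹ • x := by rw [← hc, smul_smul, inv_mul_cancel₀ hc0, one_smul]
          rw [this]; exact v.smul_mem _ hx.1) hwv
    have hsum := Submodule.finrank_sup_add_finrank_inf_eq v (Submodule.span K {w})
    rw [hinf, hv, hspan, finrank_bot] at hsum
    refine ⟨by omega, le_sup_left, sup_le hvκ ?_⟩
    rw [Submodule.span_le, Set.singleton_subset_iff]; exact hwκ
  intro s hs hs0 hQ
  have ext_of : ∀ w ∈ κ, w ∉ v → IsExternal (v ⊔ Submodule.span K {w}) :=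
    fun w hwκ hwv => (hH.1.1 _ (hpen (key w hwκ hwv))).2
  by_cases hsv : s ∈ v
  · have hlt : v < κ := lt_of_le_of_ne hvκ (by rintro rfl; rw [hv] at hκ; omega)
    obtain ⟨w, hwκ, hwv⟩ := SetLike.exists_of_lt hlt
    exact ext_of w hwκ hwv s (le_sup_left (α := Submodule K (Fin 6 → K)) hsv) hs0 hQ
  · exact ext_of s hs hsv s
      (le_sup_right (α := Submodule K (Fin 6 → K)) (Submodule.mem_span_singleton_self s))
      hs0 hQ
end

section
/- Let H be a pencilled hfd line set in PG(5,K). Then for every vertex v of H there is exactly one plane κ with v ≤ κ such that the pencil L[v,κ] is contained in H, and this unique plane κ = h(v) satisfies L[v, h(v)] = { X ∈ H : v ≤ X }. Consequently the map h from the set of vertices of H to the set of carrier planes of H is well defined and surjective. -/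
section Aux

open Module Submodule

variable {K : Type*} [Field K]

lemma kleinB_explicit (x y : Fin 6 → K) :
    kleinB x y = x 0 * y 1 + x 1 * y 0 + x 2 * y 3 + x 3 * y 2 + x 4 * y 5 + x 5 * y 4 := by
  simp only [kleinB, kleinQ, Pi.add_apply]; ring

lemma kleinB_comm (x y : Fin 6 → K) : kleinB x y = kleinB y x := by
  rw [kleinB_explicit, kleinB_explicit]; ring

/-- `B(x,·)` as a linear functional. -/
def bmap (x : Fin 6 → K) : (Fin 6 → K) →ₗ[K] K where
  toFun y := kleinB x y
  map_add' a b := by simp only [kleinB_explicit, Pi.add_apply]; ring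
  map_smul' c a := by
    simp only [kleinB_explicit, Pi.smul_apply, smul_eq_mul, RingHom.id_apply]; ring

lemma mem_polar_span {x y : Fin 6 → K} :
    y ∈ kleinPolar (Submodule.span K {x}) ↔ kleinB x y = 0 := by
  constructor
  · intro h; exact h x (Submodule.mem_span_singleton_self x)
  · intro h s hs
    obtain ⟨c, rfl⟩ := Submodule.mem_span_singleton.mp hs
    have hcx : kleinB (c • x) y = c * kleinB x y := by
      simp only [kleinB_explicit, Pi.smul_apply, smul_eq_mul]; ring
    rw [hcx, h, mul_zero]

lemma polar_span_eq_ker (x : Fin 6 → K) :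
    kleinPolar (Submodule.span K {x}) = LinearMap.ker (bmap x) := by
  ext y
  rw [LinearMap.mem_ker]
  exact mem_polar_span

lemma finrank_polar (x : Fin 6 → K) (hx : x ≠ 0) :
    Module.finrank K (kleinPolar (Submodule.span K {x})) = 5 := by
  obtain ⟨i, hi⟩ := Function.ne_iff.mp hx
  have hne : ∃ y, bmap x y ≠ 0 := by
    fin_cases i
    · exact ⟨Pi.single 1 1, by
        simpa [bmap, kleinB_explicit, Pi.single_apply] using hi⟩
    · exact ⟨Pi.single 0 1, by
        simpa [bmap, kleinB_explicit, Pi.single_apply] using hi⟩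
    · exact ⟨Pi.single 3 1, by
        simpa [bmap, kleinB_explicit, Pi.single_apply] using hi⟩
    · exact ⟨Pi.single 2 1, by
        simpa [bmap, kleinB_explicit, Pi.single_apply] using hi⟩
    · exact ⟨Pi.single 5 1, by
        simpa [bmap, kleinB_explicit, Pi.single_apply] using hi⟩
    · exact ⟨Pi.single 4 1, by
        simpa [bmap, kleinB_explicit, Pi.single_apply] using hi⟩
  obtain ⟨y, hy⟩ := hne
  have hrange : LinearMap.range (bmap x) = ⊤ := by
    rw [eq_top_iff]
    intro c _
    exact ⟨(c / bmap x y) • y, by rw [map_smul, smul_eq_mul, div_mul_cancel₀ _ hy]⟩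
  have h6 := LinearMap.finrank_range_add_finrank_ker (bmap x)
  rw [hrange, finrank_top, Module.finrank_self, Module.finrank_fin_fun] at h6
  rw [polar_span_eq_ker]
  omega

lemma exists_singular_perp (g1 g2 : Fin 6 → K) :
    ∃ x : Fin 6 → K, x ≠ 0 ∧ kleinQ x = 0 ∧ kleinB g1 x = 0 ∧ kleinB g2 x = 0 := by
  let φ : (Fin 6 → K) → ((Fin 3 → K) →ₗ[K] K) := fun g =>
    { toFun := fun c => g 1 * c 0 + g 3 * c 1 + g 5 * c 2
      map_add' := by intro a b; simp only [Pi.add_apply]; ring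
      map_smul' := by intro r a; simp only [Pi.smul_apply, smul_eq_mul, RingHom.id_apply]; ring }
  let f : (Fin 3 → K) →ₗ[K] (Fin 2 → K) := LinearMap.pi ![φ g1, φ g2]
  have hker : LinearMap.ker f ≠ ⊥ :=
    LinearMap.ker_ne_bot_of_finrank_lt (by simp [Module.finrank_fin_fun])
  obtain ⟨c, hcker, hc0⟩ := (Submodule.ne_bot_iff _).mp hker
  have hfc : f c = 0 := LinearMap.mem_ker.mp hcker
  have h1 : g1 1 * c 0 + g1 3 * c 1 + g1 5 * c 2 = 0 := congrFun hfc 0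
  have h2 : g2 1 * c 0 + g2 3 * c 1 + g2 5 * c 2 = 0 := congrFun hfc 1
  refine ⟨![c 0, 0, c 1, 0, c 2, 0], ?_, ?_, ?_, ?_⟩
  · intro hmc
    apply hc0
    funext j
    fin_cases j
    · exact congrFun hmc 0
    · exact congrFun hmc 2
    · exact congrFun hmc 4
  · show c 0 * 0 + c 1 * 0 + c 2 * 0 = 0
    ring
  · rw [kleinB_explicit]
    show g1 0 * 0 + g1 1 * c 0 + g1 2 * 0 + g1 3 * c 1 + g1 4 * 0 + g1 5 * c 2 = 0
    linear_combination h1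
  · rw [kleinB_explicit]
    show g2 0 * 0 + g2 1 * c 0 + g2 2 * 0 + g2 3 * c 1 + g2 4 * 0 + g2 5 * c 2 = 0
    linear_combination h2

lemma exists_notMem {p q : Submodule K (Fin 6 → K)} (hle : p ≤ q)
    (h : Module.finrank K p < Module.finrank K q) : ∃ w ∈ q, w ∉ p := by
  have hlt : p < q := hle.lt_of_ne (by rintro rfl; exact lt_irrefl _ h)
  obtain ⟨w, hwq, hwp⟩ := SetLike.exists_of_lt hlt
  exact ⟨w, hwq, hwp⟩

lemma finrank_sup_span {p : Submodule K (Fin 6 → K)} {w : Fin 6 → K} (hw : w ∉ p) :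
    Module.finrank K ↥(p ⊔ Submodule.span K {w}) = Module.finrank K p + 1 := by
  have h0 : w ≠ 0 := fun h => hw (h ▸ p.zero_mem)
  have hinf : p ⊓ Submodule.span K {w} = ⊥ := by
    rw [Submodule.eq_bot_iff]
    rintro z ⟨hzp, hzs⟩
    obtain ⟨c, rfl⟩ := Submodule.mem_span_singleton.mp hzs
    rcases eq_or_ne c 0 with rfl | hc
    · simp
    · exact absurd (by simpa [smul_smul, inv_mul_cancel₀ hc] using p.smul_mem c⁻¹ hzp) hw
  have heq := Submodule.finrank_sup_add_finrank_inf_eq p (Submodule.span K {w})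
  rw [hinf, finrank_span_singleton h0, finrank_bot] at heq
  omega

lemma mem_pencil_of_mem {H : Set (Submodule K (Fin 6 → K))} (hH : IsHfd H)
    {v κ X : Submodule K (Fin 6 → K)} (hv1 : Module.finrank K v = 1)
    (hκ3 : Module.finrank K κ = 3) (hvκ : v ≤ κ) (hsub : pencil v κ ⊆ H)
    (hX : X ∈ H) (hvX : v ≤ X) : X ∈ pencil v κ := by
  have hX2 : Module.finrank K X = 2 := (hH.1 X hX).1
  obtain ⟨g1, hg1X, hg10⟩ : ∃ g ∈ X, g ≠ 0 := by
    rw [← Submodule.ne_bot_iff]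
    intro h
    rw [h, finrank_bot] at hX2
    omega
  have hs1X : Submodule.span K {g1} ≤ X := (Submodule.span_singleton_le_iff_mem _ _).mpr hg1X
  obtain ⟨g2, hg2X, hg2⟩ := exists_notMem hs1X (by rw [finrank_span_singleton hg10, hX2]; omega)
  have hXeq : Submodule.span K {g1} ⊔ Submodule.span K {g2} = X := by
    apply eq_of_le_of_finrank_le
    · exact sup_le hs1X ((Submodule.span_singleton_le_iff_mem _ _).mpr hg2X)
    · rw [finrank_sup_span hg2, finrank_span_singleton hg10, hX2]
  obtain ⟨x, hx0, hxQ, hB1, hB2⟩ := exists_singular_perp g1 g2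
  set τ := kleinPolar (Submodule.span K {x}) with hτdef
  have htan : IsTangentHyperplane τ := ⟨x, hx0, hxQ, rfl⟩
  have hXτ : X ≤ τ := by
    rw [← hXeq]
    apply sup_le <;> rw [Submodule.span_singleton_le_iff_mem]
    · exact mem_polar_span.mpr (kleinB_comm g1 x ▸ hB1)
    · exact mem_polar_span.mpr (kleinB_comm g2 x ▸ hB2)
  have hτ5 : Module.finrank K τ = 5 := finrank_polar x hx0
  have hκτ : 2 ≤ Module.finrank K ↥(κ ⊓ τ) := by
    have h1 := Submodule.finrank_sup_add_finrank_inf_eq κ τ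
    have h2 : Module.finrank K ↥(κ ⊔ τ) ≤ 6 := by
      have h3 := Submodule.finrank_le (κ ⊔ τ)
      rwa [Module.finrank_fin_fun] at h3
    omega
  have hvκτ : v ≤ κ ⊓ τ := le_inf hvκ (hvX.trans hXτ)
  obtain ⟨w, hwκτ, hwv⟩ := exists_notMem hvκτ (by omega)
  obtain ⟨hwκ, hwτ⟩ := Submodule.mem_inf.mp hwκτ
  set Y := v ⊔ Submodule.span K {w} with hYdef
  have hY2 : Module.finrank K Y = 2 := by rw [hYdef, finrank_sup_span hwv, hv1]
  have hYκ : Y ≤ κ := sup_le hvκ ((Submodule.span_singleton_le_iff_mem _ _).mpr hwκ)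
  have hYH : Y ∈ H := hsub ⟨hY2, le_sup_left, hYκ⟩
  have hYτ : Y ≤ τ := sup_le (hvX.trans hXτ) ((Submodule.span_singleton_le_iff_mem _ _).mpr hwτ)
  obtain ⟨G, hG, hGuniq⟩ := hH.2 τ htan
  have hXY : X = Y := (hGuniq X ⟨hX, hXτ⟩).trans (hGuniq Y ⟨hYH, hYτ⟩).symm
  exact ⟨hX2, hvX, hXY ▸ hYκ⟩

lemma kappa_eq {v κ κ' : Submodule K (Fin 6 → K)} (hv1 : Module.finrank K v = 1)
    (hκ3 : Module.finrank K κ = 3) (hvκ : v ≤ κ) (hκ'3 : Module.finrank K κ' = 3)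
    (hpe : pencil v κ ⊆ pencil v κ') : κ = κ' := by
  obtain ⟨w1, hw1κ, hw1v⟩ := exists_notMem hvκ (by omega)
  set Y1 := v ⊔ Submodule.span K {w1} with hY1def
  have hY12 : Module.finrank K Y1 = 2 := by rw [hY1def, finrank_sup_span hw1v, hv1]
  have hY1κ : Y1 ≤ κ := sup_le hvκ ((Submodule.span_singleton_le_iff_mem _ _).mpr hw1κ)
  obtain ⟨w2, hw2κ, hw2Y1⟩ := exists_notMem hY1κ (by omega)
  have hw2v : w2 ∉ v := fun h => hw2Y1 (Submodule.mem_sup_left h)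
  set Y2 := v ⊔ Submodule.span K {w2} with hY2def
  have hY22 : Module.finrank K Y2 = 2 := by rw [hY2def, finrank_sup_span hw2v, hv1]
  have hY2κ : Y2 ≤ κ := sup_le hvκ ((Submodule.span_singleton_le_iff_mem _ _).mpr hw2κ)
  have hS : Y1 ⊔ Submodule.span K {w2} = κ := by
    apply eq_of_le_of_finrank_le
    · exact sup_le hY1κ ((Submodule.span_singleton_le_iff_mem _ _).mpr hw2κ)
    · rw [finrank_sup_span hw2Y1, hY12, hκ3]
  have h1 : Y1 ∈ pencil v κ' := hpe ⟨hY12, le_sup_left, hY1κ⟩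
  have h2 : Y2 ∈ pencil v κ' := hpe ⟨hY22, le_sup_left, hY2κ⟩
  have hκκ' : κ ≤ κ' := by
    rw [← hS]
    refine sup_le h1.2.2 ?_
    refine (Submodule.span_singleton_le_iff_mem _ _).mpr (h2.2.2 ?_)
    exact Submodule.mem_sup_right (Submodule.mem_span_singleton_self w2)
  exact eq_of_le_of_finrank_le hκκ' (by rw [hκ3, hκ'3])

end Aux

/-- Main Theorem, part (b).
For every vertex `v` of a pencilled hfd line set `H` there is exactly one plane `κ`
through `v` whose pencil `L[v,κ]` is contained in `H`; this unique plane satisfies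
`L[v,κ] = {X ∈ H : v ≤ X}`; and the resulting map `h` from vertices to carrier
planes is surjective. -/
theorem vertex_unique_plane {K : Type*} [Field K]
    (H : Set (Submodule K (Fin 6 → K))) (hH : IsPencilledHfd H) :
    (∀ v : Submodule K (Fin 6 → K), IsVertex H v →
      ∃! κ : Submodule K (Fin 6 → K),
        Module.finrank K κ = 3 ∧ v ≤ κ ∧ pencil v κ ⊆ H) ∧
    (∀ v κ : Submodule K (Fin 6 → K), IsVertex H v →
      Module.finrank K κ = 3 → v ≤ κ → pencil v κ ⊆ H →
        pencil v κ = {X | X ∈ H ∧ v ≤ X}) ∧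
    (∀ κ : Submodule K (Fin 6 → K), IsCarrier H κ →
      ∃ v : Submodule K (Fin 6 → K),
        IsVertex H v ∧ v ≤ κ ∧ pencil v κ ⊆ H) := by
  obtain ⟨hhfd, _⟩ := hH
  have part2 : ∀ v κ : Submodule K (Fin 6 → K), IsVertex H v →
      Module.finrank K κ = 3 → v ≤ κ → pencil v κ ⊆ H →
      pencil v κ = {X | X ∈ H ∧ v ≤ X} := by
    intro v κ hv hκ3 hvκ hsub
    ext X
    constructor
    · intro hX
      exact ⟨hsub hX, hX.2.1⟩
    · rintro ⟨hXH, hvX⟩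
      exact mem_pencil_of_mem hhfd hv.1 hκ3 hvκ hsub hXH hvX
  refine ⟨?_, part2, ?_⟩
  · intro v hv
    obtain ⟨hv1, κ, hκ3, hvκ, hsub⟩ := hv
    refine ⟨κ, ⟨hκ3, hvκ, hsub⟩, ?_⟩
    rintro κ' ⟨hκ'3, hvκ', hsub'⟩
    refine kappa_eq hv1 hκ'3 hvκ' hκ3 ?_
    rw [part2 v κ' ⟨hv1, κ, hκ3, hvκ, hsub⟩ hκ'3 hvκ' hsub',
      part2 v κ ⟨hv1, κ, hκ3, hvκ, hsub⟩ hκ3 hvκ hsub]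
  · rintro κ ⟨hκ3, v, hv1, hvκ, hsub⟩
    exact ⟨v, ⟨hv1, κ, hκ3, hvκ, hsub⟩, hvκ, hsub⟩
end

section
/- Let p be a point of PG(5,K) not on the Klein quadric H₅ (i.e. p = Ku for some u ∈ V with Q(u) ≠ 0) and let G be a line (2-dimensional subspace of V) with p ≤ G. Then there exists a nonzero x ∈ V with Q(x) = 0 such that p ≤ π₅(Kx) but G is not contained in π₅(Kx). -/
/-- Explicit formula for the polar bilinear form. -/
lemma kleinB_eq {K : Type*} [Field K] (x y : Fin 6 → K) :
    kleinB x y = x 0 * y 1 + x 1 * y 0 + x 2 * y 3 + x 3 * y 2 + x 4 * y 5 + x 5 * y 4 := by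
  simp only [kleinB, kleinQ, Pi.add_apply]; ring

lemma kleinQ_vec {K : Type*} [Field K] (a b c d e f : K) :
    kleinQ ![a,b,c,d,e,f] = a * b + c * d + e * f := rfl

lemma kleinB_vec {K : Type*} [Field K] (a b c d e f : K) (y : Fin 6 → K) :
    kleinB ![a,b,c,d,e,f] y = a * y 1 + b * y 0 + c * y 3 + d * y 2 + e * y 5 + f * y 4 := by
  rw [kleinB_eq]; rfl

lemma mem_kleinPolar_span_iff {K : Type*} [Field K] (x y : Fin 6 → K) :
    y ∈ kleinPolar (Submodule.span K {x}) ↔ kleinB x y = 0 := by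
  constructor
  · intro h
    exact h x (Submodule.mem_span_singleton_self x)
  · intro h
    show ∀ s ∈ Submodule.span K {x}, kleinB s y = 0
    intro s hs
    obtain ⟨c, rfl⟩ := Submodule.mem_span_singleton.mp hs
    rw [kleinB_eq] at h ⊢
    simp only [Pi.smul_apply, smul_eq_mul]
    linear_combination c * h

/-- Lemma 4.4.
If `p = Ku` is a point off the Klein quadric lying on a line `G`, then there is a
point `x` of the Klein quadric whose tangent hyperplane contains `p` but not `G`. -/
theorem exists_tangent_through_point_not_line {K : Type*} [Field K]
    (u : Fin 6 → K) (hu : u ≠ 0) (hQu : kleinQ u ≠ 0)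
    (G : Submodule K (Fin 6 → K)) (hG : Module.finrank K G = 2)
    (hpG : Submodule.span K {u} ≤ G) :
    ∃ x : Fin 6 → K, x ≠ 0 ∧ kleinQ x = 0 ∧
      Submodule.span K {u} ≤ kleinPolar (Submodule.span K {x}) ∧
      ¬ G ≤ kleinPolar (Submodule.span K {x}) := by
  by_contra hcon
  push_neg at hcon
  have hlt : Submodule.span K {u} < G := by
    rcases lt_or_eq_of_le hpG with h | h
    · exact h
    · exfalso
      have h1 : Module.finrank K (Submodule.span K ({u} : Set (Fin 6 → K))) = 1 :=
        finrank_span_singleton hu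
      rw [h, hG] at h1
      norm_num at h1
  obtain ⟨g, hgG, hgu⟩ := SetLike.exists_of_lt hlt
  have hP : ∀ x : Fin 6 → K, kleinQ x = 0 → kleinB x u = 0 → kleinB x g = 0 := by
    intro x hxQ hxB
    by_cases hx : x = 0
    · subst hx
      rw [kleinB_eq]; simp
    · have hle := hcon x hx hxQ (by
        rw [Submodule.span_le, Set.singleton_subset_iff]
        exact (mem_kleinPolar_span_iff x u).mpr hxB)
      exact (mem_kleinPolar_span_iff x g).mp (hle hgG)
  have hQu' : u 0 * u 1 + u 2 * u 3 + u 4 * u 5 ≠ 0 := hQu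
  have R02 : g 0 * u 2 = g 2 * u 0 := by
    have h := hP ![0, u 2, 0, -(u 0), 0, 0] (by rw [kleinQ_vec]; ring) (by rw [kleinB_vec]; ring)
    rw [kleinB_vec] at h
    linear_combination h
  have R03 : g 0 * u 3 = g 3 * u 0 := by
    have h := hP ![0, u 3, -(u 0), 0, 0, 0] (by rw [kleinQ_vec]; ring) (by rw [kleinB_vec]; ring)
    rw [kleinB_vec] at h
    linear_combination h
  have R04 : g 0 * u 4 = g 4 * u 0 := by
    have h := hP ![0, u 4, 0, 0, 0, -(u 0)] (by rw [kleinQ_vec]; ring) (by rw [kleinB_vec]; ring)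
    rw [kleinB_vec] at h
    linear_combination h
  have R05 : g 0 * u 5 = g 5 * u 0 := by
    have h := hP ![0, u 5, 0, 0, -(u 0), 0] (by rw [kleinQ_vec]; ring) (by rw [kleinB_vec]; ring)
    rw [kleinB_vec] at h
    linear_combination h
  have R12 : g 1 * u 2 = g 2 * u 1 := by
    have h := hP ![u 2, 0, 0, -(u 1), 0, 0] (by rw [kleinQ_vec]; ring) (by rw [kleinB_vec]; ring)
    rw [kleinB_vec] at h
    linear_combination h
  have R13 : g 1 * u 3 = g 3 * u 1 := by
    have h := hP ![u 3, 0, -(u 1), 0, 0, 0] (by rw [kleinQ_vec]; ring) (by rw [kleinB_vec]; ring)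
    rw [kleinB_vec] at h
    linear_combination h
  have R14 : g 1 * u 4 = g 4 * u 1 := by
    have h := hP ![u 4, 0, 0, 0, 0, -(u 1)] (by rw [kleinQ_vec]; ring) (by rw [kleinB_vec]; ring)
    rw [kleinB_vec] at h
    linear_combination h
  have R15 : g 1 * u 5 = g 5 * u 1 := by
    have h := hP ![u 5, 0, 0, 0, -(u 1), 0] (by rw [kleinQ_vec]; ring) (by rw [kleinB_vec]; ring)
    rw [kleinB_vec] at h
    linear_combination h
  have R24 : g 2 * u 4 = g 4 * u 2 := by
    have h := hP ![0, 0, 0, u 4, 0, -(u 2)] (by rw [kleinQ_vec]; ring) (by rw [kleinB_vec]; ring)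
    rw [kleinB_vec] at h
    linear_combination h
  have R25 : g 2 * u 5 = g 5 * u 2 := by
    have h := hP ![0, 0, 0, u 5, -(u 2), 0] (by rw [kleinQ_vec]; ring) (by rw [kleinB_vec]; ring)
    rw [kleinB_vec] at h
    linear_combination h
  have R34 : g 3 * u 4 = g 4 * u 3 := by
    have h := hP ![0, 0, u 4, 0, 0, -(u 3)] (by rw [kleinQ_vec]; ring) (by rw [kleinB_vec]; ring)
    rw [kleinB_vec] at h
    linear_combination h
  have R35 : g 3 * u 5 = g 5 * u 3 := by
    have h := hP ![0, 0, u 5, 0, -(u 3), 0] (by rw [kleinQ_vec]; ring) (by rw [kleinB_vec]; ring)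
    rw [kleinB_vec] at h
    linear_combination h
  have R01 : g 0 * u 1 = g 1 * u 0 := by
    by_cases h2 : u 2 = 0
    · by_cases h3 : u 3 = 0
      · by_cases h4 : u 4 = 0
        · by_cases h5 : u 5 = 0
          · have hu0 : u 0 ≠ 0 := by
              intro h0
              exact hQu' (by rw [h0, h2, h4]; ring)
            have hg2 : g 2 = 0 := by
              have h' : g 2 * u 0 = 0 := by rw [← R02, h2, mul_zero]
              exact (mul_eq_zero.mp h').resolve_right hu0
            have hg3 : g 3 = 0 := by
              have h' : g 3 * u 0 = 0 := by rw [← R03, h3, mul_zero]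
              exact (mul_eq_zero.mp h').resolve_right hu0
            have h := hP ![u 0, -(u 1), 1, u 0 * u 1, 0, 0]
              (by rw [kleinQ_vec]; ring)
              (by rw [kleinB_vec, h2, h3]; ring)
            rw [kleinB_vec] at h
            linear_combination -h + (u 0 * u 1) * hg2 + hg3
          · have key : (g 0 * u 1 - g 1 * u 0) * u 5 = 0 := by
              linear_combination u 1 * R05 - u 0 * R15
            have h' := (mul_eq_zero.mp key).resolve_right h5
            linear_combination h'
        · have key : (g 0 * u 1 - g 1 * u 0) * u 4 = 0 := by
            linear_combination u 1 * R04 - u 0 * R14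
          have h' := (mul_eq_zero.mp key).resolve_right h4
          linear_combination h'
      · have key : (g 0 * u 1 - g 1 * u 0) * u 3 = 0 := by
          linear_combination u 1 * R03 - u 0 * R13
        have h' := (mul_eq_zero.mp key).resolve_right h3
        linear_combination h'
    · have key : (g 0 * u 1 - g 1 * u 0) * u 2 = 0 := by
        linear_combination u 1 * R02 - u 0 * R12
      have h' := (mul_eq_zero.mp key).resolve_right h2
      linear_combination h'
  have R23 : g 2 * u 3 = g 3 * u 2 := by
    by_cases h0 : u 0 = 0
    · by_cases h1 : u 1 = 0
      · by_cases h4 : u 4 = 0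
        · by_cases h5 : u 5 = 0
          · have hu2 : u 2 ≠ 0 := by
              intro hc
              exact hQu' (by rw [h0, hc, h4]; ring)
            have hg0 : g 0 = 0 := by
              have h' : g 0 * u 2 = 0 := by rw [R02, h0, mul_zero]
              exact (mul_eq_zero.mp h').resolve_right hu2
            have hg1 : g 1 = 0 := by
              have h' : g 1 * u 2 = 0 := by rw [R12, h1, mul_zero]
              exact (mul_eq_zero.mp h').resolve_right hu2
            have h := hP ![1, u 2 * u 3, u 2, -(u 3), 0, 0]
              (by rw [kleinQ_vec]; ring)
              (by rw [kleinB_vec, h0, h1]; ring)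
            rw [kleinB_vec] at h
            linear_combination -h + hg1 + (u 2 * u 3) * hg0
          · have key : (g 2 * u 3 - g 3 * u 2) * u 5 = 0 := by
              linear_combination u 3 * R25 - u 2 * R35
            have h' := (mul_eq_zero.mp key).resolve_right h5
            linear_combination h'
        · have key : (g 2 * u 3 - g 3 * u 2) * u 4 = 0 := by
            linear_combination u 3 * R24 - u 2 * R34
          have h' := (mul_eq_zero.mp key).resolve_right h4
          linear_combination h'
      · have key : (g 2 * u 3 - g 3 * u 2) * u 1 = 0 := by
          linear_combination -(u 3) * R12 + u 2 * R13
        have h' := (mul_eq_zero.mp key).resolve_right h1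
        linear_combination h'
    · have key : (g 2 * u 3 - g 3 * u 2) * u 0 = 0 := by
        linear_combination -(u 3) * R02 + u 2 * R03
      have h' := (mul_eq_zero.mp key).resolve_right h0
      linear_combination h'
  have R45 : g 4 * u 5 = g 5 * u 4 := by
    by_cases h0 : u 0 = 0
    · by_cases h1 : u 1 = 0
      · by_cases h2 : u 2 = 0
        · by_cases h3 : u 3 = 0
          · have hu4 : u 4 ≠ 0 := by
              intro hc
              exact hQu' (by rw [h0, h2, hc]; ring)
            have hg0 : g 0 = 0 := by
              have h' : g 0 * u 4 = 0 := by rw [R04, h0, mul_zero]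
              exact (mul_eq_zero.mp h').resolve_right hu4
            have hg1 : g 1 = 0 := by
              have h' : g 1 * u 4 = 0 := by rw [R14, h1, mul_zero]
              exact (mul_eq_zero.mp h').resolve_right hu4
            have h := hP ![1, u 4 * u 5, 0, 0, u 4, -(u 5)]
              (by rw [kleinQ_vec]; ring)
              (by rw [kleinB_vec, h0, h1]; ring)
            rw [kleinB_vec] at h
            linear_combination -h + hg1 + (u 4 * u 5) * hg0
          · have key : (g 4 * u 5 - g 5 * u 4) * u 3 = 0 := by
              linear_combination -(u 5) * R34 + u 4 * R35
            have h' := (mul_eq_zero.mp key).resolve_right h3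
            linear_combination h'
        · have key : (g 4 * u 5 - g 5 * u 4) * u 2 = 0 := by
            linear_combination -(u 5) * R24 + u 4 * R25
          have h' := (mul_eq_zero.mp key).resolve_right h2
          linear_combination h'
      · have key : (g 4 * u 5 - g 5 * u 4) * u 1 = 0 := by
          linear_combination -(u 5) * R14 + u 4 * R15
        have h' := (mul_eq_zero.mp key).resolve_right h1
        linear_combination h'
    · have key : (g 4 * u 5 - g 5 * u 4) * u 0 = 0 := by
        linear_combination -(u 5) * R04 + u 4 * R05
      have h' := (mul_eq_zero.mp key).resolve_right h0
      linear_combination h'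
  have Rall : ∀ p q : Fin 6, g p * u q = g q * u p := by
    intro p q
    fin_cases p <;> fin_cases q <;>
      first
        | rfl
        | exact R01 | exact R01.symm | exact R02 | exact R02.symm
        | exact R03 | exact R03.symm | exact R04 | exact R04.symm
        | exact R05 | exact R05.symm | exact R12 | exact R12.symm
        | exact R13 | exact R13.symm | exact R14 | exact R14.symm
        | exact R15 | exact R15.symm | exact R23 | exact R23.symm
        | exact R24 | exact R24.symm | exact R25 | exact R25.symm
        | exact R34 | exact R34.symm | exact R35 | exact R35.symm
        | exact R45 | exact R45.symm
  obtain ⟨k, hk⟩ : ∃ k : Fin 6, u k ≠ 0 := by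
    by_contra hall
    push_neg at hall
    exact hu (funext hall)
  apply hgu
  rw [Submodule.mem_span_singleton]
  refine ⟨g k / u k, funext fun i => ?_⟩
  have h := Rall i k
  simp only [Pi.smul_apply, smul_eq_mul]
  rw [div_mul_eq_mul_div, div_eq_iff hk]
  linear_combination -h
end

section
/- Let H be a pencilled hfd line set in PG(5,K). Then H has at least one carrier plane, and H has at least two distinct vertices (i.e. there exist distinct 1-dimensional subspaces v₁ ≠ v₂ of V, each of which is the vertex of some pencil entirely contained in H). -/
/-- For every nonzero `w` there is a singular point `x` not conjugate to `w`. -/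
lemma klein_key {K : Type*} [Field K] (w : Fin 6 → K) (hw : w ≠ 0) :
    ∃ x : Fin 6 → K, x ≠ 0 ∧ kleinQ x = 0 ∧ kleinB x w ≠ 0 := by
  rw [Function.ne_iff] at hw
  obtain ⟨i, hi⟩ := hw
  fin_cases i
  · exact ⟨fun k => if k = 1 then 1 else 0,
      fun h => one_ne_zero (congrFun h 1), by simp [kleinQ],
      by simpa [kleinB, kleinQ, mul_add, add_mul] using hi⟩
  · exact ⟨fun k => if k = 0 then 1 else 0,
      fun h => one_ne_zero (congrFun h 0), by simp [kleinQ],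
      by simpa [kleinB, kleinQ, mul_add, add_mul] using hi⟩
  · exact ⟨fun k => if k = 3 then 1 else 0,
      fun h => one_ne_zero (congrFun h 3), by simp [kleinQ],
      by simpa [kleinB, kleinQ, mul_add, add_mul] using hi⟩
  · exact ⟨fun k => if k = 2 then 1 else 0,
      fun h => one_ne_zero (congrFun h 2), by simp [kleinQ],
      by simpa [kleinB, kleinQ, mul_add, add_mul] using hi⟩
  · exact ⟨fun k => if k = 5 then 1 else 0,
      fun h => one_ne_zero (congrFun h 5), by simp [kleinQ],
      by simpa [kleinB, kleinQ, mul_add, add_mul] using hi⟩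
  · exact ⟨fun k => if k = 4 then 1 else 0,
      fun h => one_ne_zero (congrFun h 4), by simp [kleinQ],
      by simpa [kleinB, kleinQ, mul_add, add_mul] using hi⟩

/-- Lemma 4.5.
A pencilled hfd line set has at least one carrier plane and at least two distinct
vertices. -/
theorem carrier_and_two_vertices {K : Type*} [Field K]
    (H : Set (Submodule K (Fin 6 → K))) (hH : IsPencilledHfd H) :
    (∃ κ : Submodule K (Fin 6 → K), IsCarrier H κ) ∧
    (∃ v₁ v₂ : Submodule K (Fin 6 → K),
      IsVertex H v₁ ∧ IsVertex H v₂ ∧ v₁ ≠ v₂) := by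
  obtain ⟨⟨_, hτ⟩, hpen⟩ := hH
  -- Step 1: H is nonempty, using any tangent hyperplane.
  obtain ⟨x₀, hx₀, hQx₀, -⟩ := klein_key (K := K) (fun _ => 1)
    (fun h => one_ne_zero (congrFun h 0))
  obtain ⟨G₀, ⟨hG₀H, -⟩, -⟩ := hτ (kleinPolar (Submodule.span K {x₀}))
    ⟨x₀, hx₀, hQx₀, rfl⟩
  obtain ⟨v₁, κ₁, hv₁r, hκ₁r, hv₁κ₁, hPsub, -⟩ := hpen G₀ hG₀H
  -- Step 2: pick a nonzero vector `w` in the vertex `v₁`.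
  have hv₁ne : v₁ ≠ ⊥ := by
    intro h
    rw [h] at hv₁r
    simp [finrank_bot] at hv₁r
  obtain ⟨w, hwv₁, hw0⟩ := Submodule.exists_mem_ne_zero_of_ne_bot hv₁ne
  -- Step 3: a tangent hyperplane avoiding `w`.
  obtain ⟨x, hx, hQx, hBxw⟩ := klein_key w hw0
  obtain ⟨G₂, ⟨hG₂H, hG₂τ⟩, -⟩ := hτ (kleinPolar (Submodule.span K {x}))
    ⟨x, hx, hQx, rfl⟩
  obtain ⟨v₂, κ₂, hv₂r, hκ₂r, hv₂κ₂, hPsub₂, _, hv₂G₂, -⟩ := hpen G₂ hG₂H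
  refine ⟨⟨κ₁, hκ₁r, v₁, hv₁r, hv₁κ₁, hPsub⟩,
    v₁, v₂, ⟨hv₁r, κ₁, hκ₁r, hv₁κ₁, hPsub⟩, ⟨hv₂r, κ₂, hκ₂r, hv₂κ₂, hPsub₂⟩, ?_⟩
  intro h
  apply hBxw
  have hwτ : w ∈ kleinPolar (Submodule.span K {x}) :=
    hG₂τ (hv₂G₂ (h ▸ hwv₁))
  exact hwτ x (Submodule.mem_span_singleton_self x)
end
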